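/- (Attainment of the strong Fano bound.) Let q ≥ 2 and let p be a joint pmf of (x, y) on Fin m × Fin q. Suppose (i) uniform informativeness: there is h ≥ 0 such that H(p(· | j)) = h for every j with p_X(j) > 0, and (ii) no clear runner-up: for every j with p_X(j) > 0, the (q - 1) least likely outcomes of the conditional pmf p(· | j) are equally likely (a condition that is automatic when q = 2). Then Acc = ∑ over j with p_X(j) > 0 of p_X(j) * (max i, p(i | j)) satisfies h̄_q(Acc) = h, i.e. Acc = h̄_q⁻¹(H(y | x)) and the strong Fano bound is attained. -/

import Mathlib

/-- `h̄_q(a) = -a log a - (1-a) log((1-a)/(q-1))`, natural log, with the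
convention `0 · log 0 = 0` (Mathlib's `Real.log 0 = 0` realizes it). -/
noncomputable def hbar (q : ℕ) (a : ℝ) : ℝ :=
  -a * Real.log a - (1 - a) * Real.log ((1 - a) / ((q : ℝ) - 1))

/-- `h̄_q⁻¹ : [0, log q] → [1/q, 1]`, the inverse of the strictly decreasing
bijection `h̄_q : [1/q, 1] → [0, log q]`. -/
noncomputable def hbarInv (q : ℕ) (h : ℝ) : ℝ :=
  Function.invFunOn (hbar q) (Set.Icc (1 / (q : ℝ)) 1) h

/-- Shannon entropy of a probability vector, in nats, convention `0 log 0 = 0`. -/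
noncomputable def entropy {q : ℕ} (r : Fin q → ℝ) : ℝ :=
  -∑ i, r i * Real.log (r i)

lemma hbar_eq (q : ℕ) (hq : 2 ≤ q) (a : ℝ) :
    hbar q a = -(a * Real.log a) - ((1 - a) * Real.log (1 - a))
      + (1 - a) * Real.log ((q : ℝ) - 1) := by
  have hq1 : (q : ℝ) - 1 ≠ 0 := by
    have : (2:ℝ) ≤ q := by exact_mod_cast hq
    linarith
  unfold hbar
  rcases eq_or_ne a 1 with rfl | ha
  · simp
  · rw [Real.log_div (by intro hc; apply ha; linarith) hq1]; ring

lemma hbar_cont (q : ℕ) (hq : 2 ≤ q) : Continuous (hbar q) := by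
  have : hbar q = fun a => -(a * Real.log a) - ((1 - a) * Real.log (1 - a))
      + (1 - a) * Real.log ((q : ℝ) - 1) := funext (hbar_eq q hq)
  rw [this]
  have h1 : Continuous fun a : ℝ => a * Real.log a := Real.continuous_mul_log
  have h2 : Continuous fun a : ℝ => (1 - a) * Real.log (1 - a) :=
    h1.comp (continuous_const.sub continuous_id)
  continuity

lemma hbar_strictAntiOn (q : ℕ) (hq : 2 ≤ q) :
    StrictAntiOn (hbar q) (Set.Icc (1 / (q : ℝ)) 1) := by
  have hq2 : (2:ℝ) ≤ q := by exact_mod_cast hq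
  apply strictAntiOn_of_deriv_neg (convex_Icc _ _) (hbar_cont q hq).continuousOn
  intro x hx
  rw [interior_Icc] at hx
  obtain ⟨hx1, hx2⟩ := hx
  have hqpos : (0:ℝ) < q := by linarith
  have hxpos : 0 < x := lt_trans (by positivity) hx1
  have h1x : 0 < 1 - x := by linarith
  have hd : HasDerivAt (hbar q)
      (Real.log (1 - x) - Real.log x - Real.log ((q : ℝ) - 1)) x := by
    have e : hbar q = fun a => -(a * Real.log a) - ((1 - a) * Real.log (1 - a))
        + (1 - a) * Real.log ((q : ℝ) - 1) := funext (hbar_eq q hq)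
    rw [e]
    have d1 : HasDerivAt (fun a : ℝ => a * Real.log a) (Real.log x + 1) x :=
      Real.hasDerivAt_mul_log hxpos.ne'
    have dsub : HasDerivAt (fun a : ℝ => 1 - a) (-1) x := by
      simpa using (hasDerivAt_id x).const_sub 1
    have d2 : HasDerivAt (fun a : ℝ => (1 - a) * Real.log (1 - a))
        ((Real.log (1 - x) + 1) * (-1)) x :=
      (Real.hasDerivAt_mul_log h1x.ne').comp x dsub
    have d3 : HasDerivAt (fun a : ℝ => (1 - a) * Real.log ((q : ℝ) - 1))
        ((-1) * Real.log ((q : ℝ) - 1)) x := dsub.mul_const _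
    have := ((d1.neg.sub d2).add d3)
    refine this.congr_deriv ?_
    ring
  rw [hd.deriv]
  have hlt : 1 - x < x * ((q : ℝ) - 1) := by
    have : 1 < x * q := by
      have := (div_lt_iff₀ hqpos).mp (by rwa [one_div] at hx1; )
      linarith [((div_lt_iff₀ hqpos).mp hx1)]
    nlinarith
  have := Real.log_lt_log h1x hlt
  rw [Real.log_mul hxpos.ne' (by linarith : (q:ℝ) - 1 ≠ 0)] at this
  linarith

/-- Attainment of the strong Fano bound: for a joint pmf `p` of
`(x, y)` on `Fin m × Fin q` (`q ≥ 2`), if (i) every conditional pmf `p(·|j)`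
(for `p_X(j) > 0`) has the same entropy `h ≥ 0`, and (ii) for every such `j`
the `q - 1` least likely outcomes of `p(·|j)` are equally likely, then
`Acc = ∑_{j : p_X(j) > 0} p_X(j) max_i p(i|j)` satisfies `h̄_q(Acc) = h`,
i.e. `Acc = h̄_q⁻¹(H(y|x))`. -/
theorem stmt_12 (m q : ℕ) (hq : 2 ≤ q) (p : Fin m × Fin q → ℝ)
    (hp0 : ∀ t, 0 ≤ p t) (hp1 : ∑ t, p t = 1)
    (pX : Fin m → ℝ) (hpX : ∀ j, pX j = ∑ i, p (j, i))
    (cond : Fin m → Fin q → ℝ) (hcond : ∀ j i, cond j i = p (j, i) / pX j)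
    (h : ℝ) (hh : 0 ≤ h)
    (hunif : ∀ j, 0 < pX j → entropy (cond j) = h)
    (hrunner : ∀ j, 0 < pX j → ∃ istar : Fin q,
      (∀ i, cond j i ≤ cond j istar) ∧
      ∀ i, i ≠ istar → cond j i = (1 - cond j istar) / ((q : ℝ) - 1))
    (Acc : ℝ) (hAcc : Acc = ∑ j ∈ Finset.univ.filter (fun j : Fin m => 0 < pX j),
      pX j * Finset.univ.sup' ⟨⟨0, by omega⟩, Finset.mem_univ _⟩ (cond j))
    (Hyx : ℝ) (hHyx : Hyx = ∑ j ∈ Finset.univ.filter (fun j : Fin m => 0 < pX j),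
      pX j * entropy (cond j)) :
    hbar q Acc = h ∧ Acc = hbarInv q Hyx := by
  have hq2 : (2:ℝ) ≤ q := by exact_mod_cast hq
  have hq1 : (q:ℝ) - 1 ≠ 0 := by linarith
  set F := Finset.univ.filter (fun j : Fin m => 0 < pX j) with hF
  -- total mass of positive-marginal rows is 1
  have hsum_pX : ∑ j ∈ F, pX j = 1 := by
    rw [hF, Finset.sum_filter_of_ne]
    · rw [← hp1, Fintype.sum_prod_type]
      exact Finset.sum_congr rfl fun j _ => hpX j
    · intro j _ hne
      have : 0 ≤ pX j := by
        rw [hpX]; exact Finset.sum_nonneg fun i _ => hp0 _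
      exact lt_of_le_of_ne this (Ne.symm hne)
  have hFne : F.Nonempty := Finset.nonempty_of_sum_ne_zero (by rw [hsum_pX]; norm_num)
  -- per-row facts
  have key : ∀ j ∈ F, ∃ a : ℝ,
      a ∈ Set.Icc (1/(q:ℝ)) 1 ∧ hbar q a = h ∧
      Finset.univ.sup' ⟨⟨0, by omega⟩, Finset.mem_univ _⟩ (cond j) = a := by
    intro j hj
    have hjpos : 0 < pX j := by
      rw [hF, Finset.mem_filter] at hj; exact hj.2
    obtain ⟨istar, hmax, hothers⟩ := hrunner j hjpos
    set a := cond j istar with ha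
    have hcnn : ∀ i, 0 ≤ cond j i := fun i => by
      rw [hcond]; exact div_nonneg (hp0 _) hjpos.le
    have hcsum : ∑ i, cond j i = 1 := by
      have : ∑ i, cond j i = (∑ i, p (j, i)) / pX j := by
        rw [Finset.sum_div]; exact Finset.sum_congr rfl fun i _ => hcond j i
      rw [this, ← hpX, div_self hjpos.ne']
    have ha1 : a ≤ 1 := by
      calc a ≤ ∑ i, cond j i :=
        Finset.single_le_sum (fun i _ => hcnn i) (Finset.mem_univ istar)
      _ = 1 := hcsum
    have haq : 1/(q:ℝ) ≤ a := by
      have : (1:ℝ) ≤ q • a := by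
        rw [← hcsum]
        simpa using Finset.sum_le_card_nsmul Finset.univ (cond j) a
          (fun i _ => hmax i)
      rw [nsmul_eq_mul] at this
      rw [div_le_iff₀ (by linarith : (0:ℝ) < q)]
      linarith
    refine ⟨a, ⟨haq, ha1⟩, ?_, ?_⟩
    · -- hbar q a = entropy (cond j) = h
      rw [← hunif j hjpos]
      have hsplit : ∑ i, cond j i * Real.log (cond j i)
          = a * Real.log a + ∑ i ∈ Finset.univ.erase istar,
              cond j i * Real.log (cond j i) :=
        (Finset.add_sum_erase _ _ (Finset.mem_univ istar)).symm
      have hcard : (Finset.univ.erase istar).card = q - 1 := by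
        rw [Finset.card_erase_of_mem (Finset.mem_univ _), Finset.card_univ,
          Fintype.card_fin]
      set b := (1 - a) / ((q:ℝ) - 1) with hb
      have hconst : ∑ i ∈ Finset.univ.erase istar, cond j i * Real.log (cond j i)
          = ((q:ℝ) - 1) * (b * Real.log b) := by
        rw [Finset.sum_congr rfl (fun i hi => by
          rw [hothers i (Finset.ne_of_mem_erase hi)]),
          Finset.sum_const, hcard, nsmul_eq_mul]
        congr 1
        have : (1:ℝ) ≤ q := by linarith
        push_cast [Nat.cast_sub (by omega : 1 ≤ q)]
        ring
      have : entropy (cond j) = -(a * Real.log a) - ((q:ℝ)-1) * (b * Real.log b) := by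
        unfold entropy; rw [hsplit, hconst]; ring
      rw [this]
      unfold hbar
      rw [hb]
      field_simp
    · -- sup' = a
      apply le_antisymm
      · exact Finset.sup'_le _ _ fun i _ => hmax i
      · exact Finset.le_sup' (cond j) (Finset.mem_univ istar)
  -- all the a's coincide
  obtain ⟨j0, hj0⟩ := hFne
  obtain ⟨a0, ha0mem, ha0h, _⟩ := key j0 hj0
  have hsame : ∀ j ∈ F,
      Finset.univ.sup' ⟨⟨0, by omega⟩, Finset.mem_univ _⟩ (cond j) = a0 := by
    intro j hj
    obtain ⟨a, hamem, hah, hasup⟩ := key j hj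
    rw [hasup]
    exact (hbar_strictAntiOn q hq).injOn hamem ha0mem (by rw [hah, ha0h])
  have hAcc' : Acc = a0 := by
    rw [hAcc, Finset.sum_congr rfl (fun j hj => by rw [hsame j hj]),
      ← Finset.sum_mul, hsum_pX, one_mul]
  have hHyx' : Hyx = h := by
    rw [hHyx, Finset.sum_congr rfl (fun j hj => by
      rw [hunif j (by rw [hF, Finset.mem_filter] at hj; exact hj.2)]),
      ← Finset.sum_mul, hsum_pX, one_mul]
  have hbarAcc : hbar q Acc = h := by rw [hAcc']; exact ha0h
  refine ⟨hbarAcc, ?_⟩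
  -- invFunOn
  have hAccmem : Acc ∈ Set.Icc (1/(q:ℝ)) 1 := by rw [hAcc']; exact ha0mem
  have hex : ∃ a ∈ Set.Icc (1/(q:ℝ)) 1, hbar q a = Hyx :=
    ⟨Acc, hAccmem, by rw [hbarAcc, hHyx']⟩
  have hmem := Function.invFunOn_mem hex
  have happ := Function.invFunOn_eq hex
  have heq2 : hbar q (Function.invFunOn (hbar q) (Set.Icc (1/(q:ℝ)) 1) Hyx)
      = hbar q Acc := by rw [happ, hbarAcc, hHyx']
  exact ((hbar_strictAntiOn q hq).injOn hmem hAccmem heq2).symm
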